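/- Under Assumption D (the treatment is generated as D = h(Z, η) for a measurable function h, where η is a random vector with a density on 𝒯 and Z is independent of (Y0, Y1, η)), Condition S1* implies Condition S1. -/

import Mathlib

open MeasureTheory ProbabilityTheory Filter Set

/-- Probability of an event. -/
noncomputable def pr {Ω : Type*} [MeasurableSpace Ω] (μ : Measure Ω) (s : Set Ω) : ℝ :=
  (μ s).toReal

/-- Conditional probability `P[s | A]`. -/
noncomputable def cpr {Ω : Type*} [MeasurableSpace Ω] (μ : Measure Ω) (s A : Set Ω) : ℝ :=
  pr μ (s ∩ A) / pr μ A

open scoped ENNReal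

lemma aux_ae_nonneg {T : Type*} [MeasurableSpace T] (ν : Measure T) [IsFiniteMeasure ν]
    (F : T → ℝ) (hF : Measurable F)
    (hpos : ∀ s : Set T, MeasurableSet s → 0 ≤ ∫ t in s, F t ∂ν) : 0 ≤ᵐ[ν] F := by
  have hBmeas : ∀ n : ℕ, MeasurableSet {t | |F t| ≤ (n : ℝ)} := fun n =>
    hF.abs measurableSet_Iic
  have hint : ∀ n : ℕ, IntegrableOn F {t | |F t| ≤ (n : ℝ)} ν := by
    intro n
    refine Measure.integrableOn_of_bounded (M := (n : ℝ)) (measure_ne_top ν _)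
      hF.aestronglyMeasurable ?_
    filter_upwards [ae_restrict_mem (hBmeas n)] with t ht using ht
  have key : ∀ n : ℕ, 0 ≤ᵐ[ν.restrict {t | |F t| ≤ (n : ℝ)}] F := by
    intro n
    refine ae_nonneg_of_forall_setIntegral_nonneg (hint n) (fun s hs _ => ?_)
    rw [Measure.restrict_restrict hs]
    exact hpos _ (hs.inter (hBmeas n))
  have hneg : ν {t | F t < 0} = 0 := by
    have hcover : {t | F t < 0} ⊆ ⋃ n : ℕ, ({t | F t < 0} ∩ {t | |F t| ≤ (n : ℝ)}) := by
      intro t ht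
      obtain ⟨n, hn⟩ := exists_nat_ge (|F t|)
      exact mem_iUnion.2 ⟨n, ht, hn⟩
    refine measure_mono_null hcover (measure_iUnion_null fun n => ?_)
    have h0 := key n
    rw [EventuallyLE, ae_iff] at h0
    have h1 : {t | ¬ (0 : T → ℝ) t ≤ F t} = {t | F t < 0} := by
      ext t; simp [not_le]
    rw [h1, Measure.restrict_apply (measurableSet_lt hF measurable_const)] at h0
    exact h0
  rw [EventuallyLE, ae_iff]
  have h1 : {t | ¬ (0 : T → ℝ) t ≤ F t} = {t | F t < 0} := by
    ext t; simp [not_le]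
  rw [h1]; exact hneg

lemma aux_integrable {T : Type*} [MeasurableSpace T] (ν : Measure T)
    [IsProbabilityMeasure ν] (F : T → ℝ) (hF : Measurable F) (hnn : 0 ≤ᵐ[ν] F)
    (hbd : ∀ s : Set T, MeasurableSet s → ∫ t in s, F t ∂ν ≤ 1) : Integrable F ν := by
  set g : T → ℝ≥0∞ := fun t => ENNReal.ofReal (F t) with hg
  have hgmeas : Measurable g := hF.ennreal_ofReal
  have hBmeas : ∀ n : ℕ, MeasurableSet {t | F t ≤ (n : ℝ)} := fun n => hF measurableSet_Iic
  have hfin : ∀ n : ℕ, ∫⁻ t in {t | F t ≤ (n : ℝ)}, g t ∂ν ≤ (n : ℝ≥0∞) := by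
    intro n
    calc ∫⁻ t in {t | F t ≤ (n : ℝ)}, g t ∂ν
        ≤ ∫⁻ _ in {t | F t ≤ (n : ℝ)}, ENNReal.ofReal (n : ℝ) ∂ν := by
          refine setLIntegral_mono measurable_const (fun t ht => ?_)
          exact ENNReal.ofReal_le_ofReal ht
      _ = ENNReal.ofReal (n : ℝ) * ν {t | F t ≤ (n : ℝ)} := by
          rw [setLIntegral_const]
      _ ≤ ENNReal.ofReal (n : ℝ) * 1 := by
          exact mul_le_mul_right prob_le_one _
      _ = (n : ℝ≥0∞) := by rw [mul_one, ENNReal.ofReal_natCast]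
  have heq : ∀ n : ℕ, ∫⁻ t in {t | F t ≤ (n : ℝ)}, g t ∂ν
      = ENNReal.ofReal (∫ t in {t | F t ≤ (n : ℝ)}, F t ∂ν) := by
    intro n
    rw [integral_eq_lintegral_of_nonneg_ae (ae_restrict_of_ae hnn) hF.aestronglyMeasurable.restrict]
    rw [ENNReal.ofReal_toReal ((hfin n).trans_lt (ENNReal.natCast_lt_top n)).ne]
  have hle1 : ∀ n : ℕ, ∫⁻ t in {t | F t ≤ (n : ℝ)}, g t ∂ν ≤ 1 := by
    intro n
    rw [heq n]
    exact ENNReal.ofReal_le_one.2 (hbd _ (hBmeas n))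
  have hmono : Monotone (fun n : ℕ => ({t | F t ≤ (n : ℝ)}).indicator g) := by
    intro m n hmn
    refine Set.indicator_le_indicator_of_subset (fun t ht => ?_) (fun t => zero_le)
    exact le_trans (show F t ≤ (m : ℝ) from ht) (Nat.cast_le.2 hmn)
  have hsup : ∀ t, (⨆ n : ℕ, ({t' | F t' ≤ (n : ℝ)}).indicator g t) = g t := by
    intro t
    refine le_antisymm (iSup_le fun n => Set.indicator_le_self _ _ t) ?_
    obtain ⟨n, hn⟩ := exists_nat_ge (F t)
    calc g t = ({t' | F t' ≤ (n : ℝ)}).indicator g t :=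
          (Set.indicator_of_mem (show t ∈ {t' | F t' ≤ (n : ℝ)} from hn) g).symm
      _ ≤ ⨆ n : ℕ, ({t' | F t' ≤ (n : ℝ)}).indicator g t :=
          le_iSup (fun n : ℕ => ({t' | F t' ≤ (n : ℝ)}).indicator g t) n
  have hgle : ∫⁻ t, g t ∂ν ≤ 1 := by
    have h1 : ∫⁻ t, g t ∂ν = ⨆ n : ℕ, ∫⁻ t, ({t' | F t' ≤ (n : ℝ)}).indicator g t ∂ν := by
      rw [← lintegral_iSup (fun n => hgmeas.indicator (hBmeas n)) hmono]
      exact lintegral_congr fun t => (hsup t).symm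
    rw [h1]
    refine iSup_le fun n => ?_
    rw [lintegral_indicator (hBmeas n)]
    exact hle1 n
  refine ⟨hF.aestronglyMeasurable, ?_⟩
  have hcongr : ∫⁻ t, (‖F t‖₊ : ℝ≥0∞) ∂ν = ∫⁻ t, g t ∂ν :=
    lintegral_congr_ae (hnn.mono fun t ht =>
      show ((‖F t‖₊ : ℝ≥0∞)) = ENNReal.ofReal (F t) by
        rw [← enorm_eq_nnnorm, ← ofReal_norm, Real.norm_of_nonneg ht])
  rw [HasFiniteIntegral]; simp only [enorm_eq_nnnorm]; rw [hcongr]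
  exact hgle.trans_lt ENNReal.one_lt_top

/-- Lemma 2: under Assumption D (selection `D = h(Z, η)` with `Z ⊥ (Y₀, Y₁, η)`),
Condition S₁* implies Condition S₁.  Here `ν` is the distribution of the type `η`, and
`F_d y t = P[Y_d ≤ y | η = t]` is a conditional CDF of `Y_d` given `η`, encoded by the
disintegration property `P[Y_d ≤ y, η ∈ s] = ∫_{s} F_d y t dν(t)`. -/
theorem condS1star_implies_condS1
    {Ω : Type*} [MeasurableSpace Ω] (μ : Measure Ω) [IsProbabilityMeasure μ]
    {T : Type*} [MeasurableSpace T]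
    (L : ℕ) [NeZero L]
    (Y0 Y1 Y : Ω → ℝ) (η : Ω → T) (Z : Ω → Fin L) (h : Fin L → T → ℕ) (D : Ω → ℕ)
    (hmY0 : Measurable Y0) (hmY1 : Measurable Y1) (hmη : Measurable η) (hmZ : Measurable Z)
    (hmh : ∀ ℓ, Measurable (h ℓ))
    -- Assumption D: D = h(Z, η), with Z ⊥ (Y₀, Y₁, η)
    (hD : ∀ ω, D ω = h (Z ω) (η ω))
    (hYobs : ∀ ω, Y ω = if D ω = 1 then Y1 ω else Y0 ω)
    (hindep : IndepFun Z (fun ω => (Y0 ω, Y1 ω, η ω)) μ)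
    (hZpos : ∀ ℓ : Fin L, 0 < pr μ {ω | Z ω = ℓ})
    (hposD1Z : ∀ ℓ : Fin L, 0 < pr μ {ω | D ω = 1 ∧ Z ω = ℓ})
    -- the distribution of η and the conditional CDFs of Y₀, Y₁ given η
    (ν : Measure T) (hν : ν = μ.map η)
    (F0 F1 : ℝ → T → ℝ)
    (hF0meas : ∀ y, Measurable (F0 y)) (hF1meas : ∀ y, Measurable (F1 y))
    (hF0 : ∀ (y : ℝ) (s : Set T), MeasurableSet s →
      pr μ {ω | Y0 ω ≤ y ∧ η ω ∈ s} = ∫ t in s, F0 y t ∂ν)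
    (hF1 : ∀ (y : ℝ) (s : Set T), MeasurableSet s →
      pr μ {ω | Y1 ω ≤ y ∧ η ω ∈ s} = ∫ t in s, F1 y t ∂ν)
    -- Condition S₁*
    (condS1star : ∀ w wt : T → ℝ, Measurable w → Measurable wt →
      (∀ t, 0 ≤ w t) → (∀ t, 0 ≤ wt t) →
      (∫ t, w t ∂ν) = 1 → (∫ t, wt t ∂ν) = 1 →
      (∀ y : ℝ, (∫ t, w t * F1 y t ∂ν) ≤ ∫ t, wt t * F1 y t ∂ν) →
      (∀ y : ℝ, (∫ t, w t * F0 y t ∂ν) ≤ ∫ t, wt t * F0 y t ∂ν)) :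
    -- Condition S₁
    ∀ w wt : Fin L → ℝ, (∀ ℓ, 0 ≤ w ℓ) → (∀ ℓ, 0 ≤ wt ℓ) →
      (∑ ℓ, w ℓ) = 1 → (∑ ℓ, wt ℓ) = 1 →
      (∀ y : ℝ, (∑ ℓ, w ℓ * cpr μ {ω | Y1 ω ≤ y} {ω | D ω = 1 ∧ Z ω = ℓ})
        ≤ ∑ ℓ, wt ℓ * cpr μ {ω | Y1 ω ≤ y} {ω | D ω = 1 ∧ Z ω = ℓ}) →
      (∀ y : ℝ, (∑ ℓ, w ℓ * cpr μ {ω | Y0 ω ≤ y} {ω | D ω = 1 ∧ Z ω = ℓ})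
        ≤ ∑ ℓ, wt ℓ * cpr μ {ω | Y0 ω ≤ y} {ω | D ω = 1 ∧ Z ω = ℓ}) := by
  haveI hνprob : IsProbabilityMeasure ν := by
    rw [hν]; exact Measure.isProbabilityMeasure_map hmη.aemeasurable
  have hSmeas : ∀ ℓ, MeasurableSet (h ℓ ⁻¹' {1}) := fun ℓ => hmh ℓ (measurableSet_singleton 1)
  have hνS : ∀ ℓ, ν (h ℓ ⁻¹' {1}) = μ (η ⁻¹' (h ℓ ⁻¹' {1})) := fun ℓ => by
    rw [hν, Measure.map_apply hmη (hSmeas ℓ)]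
  -- the event {D = 1 ∧ Z = ℓ} factorizes
  have hA : ∀ ℓ, μ {ω | D ω = 1 ∧ Z ω = ℓ} = μ {ω | Z ω = ℓ} * ν (h ℓ ⁻¹' {1}) := by
    intro ℓ
    have e1 : {ω | D ω = 1 ∧ Z ω = ℓ}
        = Z ⁻¹' {ℓ} ∩ (fun ω => (Y0 ω, Y1 ω, η ω)) ⁻¹'
            ((univ : Set ℝ) ×ˢ (univ : Set ℝ) ×ˢ (h ℓ ⁻¹' {1})) := by
      ext ω
      simp only [Set.mem_setOf_eq, Set.mem_inter_iff, Set.mem_preimage, Set.mem_singleton_iff,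
        Set.mem_prod, Set.mem_univ, true_and]
      rw [hD ω]
      constructor
      · rintro ⟨h1, h2⟩; rw [h2] at h1; exact ⟨h2, h1⟩
      · rintro ⟨h1, h2⟩; rw [h1]; exact ⟨h2, rfl⟩
    have e2 : Z ⁻¹' {ℓ} = {ω | Z ω = ℓ} := by ext ω; simp
    have e3 : (fun ω => (Y0 ω, Y1 ω, η ω)) ⁻¹'
        ((univ : Set ℝ) ×ˢ (univ : Set ℝ) ×ˢ (h ℓ ⁻¹' {1})) = η ⁻¹' (h ℓ ⁻¹' {1}) := by
      ext ω; simp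
    rw [e1, hindep.measure_inter_preimage_eq_mul _ _ (measurableSet_singleton ℓ)
      (MeasurableSet.univ.prod (MeasurableSet.univ.prod (hSmeas ℓ))), e2, e3, hνS ℓ]
  have hapos : ∀ ℓ, 0 < (ν (h ℓ ⁻¹' {1})).toReal := by
    intro ℓ
    have h1 := hposD1Z ℓ
    have h2 : pr μ {ω | D ω = 1 ∧ Z ω = ℓ}
        = pr μ {ω | Z ω = ℓ} * (ν (h ℓ ⁻¹' {1})).toReal := by
      simp only [pr]; rw [hA ℓ, ENNReal.toReal_mul]
    rw [h2] at h1
    rcases mul_pos_iff.mp h1 with ⟨_, hp⟩ | ⟨hp, _⟩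
    · exact hp
    · exact absurd hp (not_lt.2 (le_of_lt (hZpos ℓ)))
  have hZne : ∀ ℓ, pr μ {ω | Z ω = ℓ} ≠ 0 := fun ℓ => (hZpos ℓ).ne'
  -- main computation for a generic outcome G with conditional cdf Fd
  have main : ∀ (G : Ω → ℝ) (Fd : ℝ → T → ℝ), Measurable G → (∀ y, Measurable (Fd y)) →
      IndepFun Z (fun ω => (G ω, η ω)) μ →
      (∀ (y : ℝ) (s : Set T), MeasurableSet s →
        pr μ {ω | G ω ≤ y ∧ η ω ∈ s} = ∫ t in s, Fd y t ∂ν) →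
      ∀ (v : Fin L → ℝ) (y : ℝ),
        (∑ ℓ, v ℓ * cpr μ {ω | G ω ≤ y} {ω | D ω = 1 ∧ Z ω = ℓ})
          = ∫ t, (∑ ℓ, (h ℓ ⁻¹' {1}).indicator
              (fun _ => v ℓ / (ν (h ℓ ⁻¹' {1})).toReal) t) * Fd y t ∂ν := by
    intro G Fd hmG hmFd hind hFd v y
    have hle : ∀ s : Set T, MeasurableSet s → 0 ≤ ∫ t in s, Fd y t ∂ν := fun s hs => by
      rw [← hFd y s hs]; exact ENNReal.toReal_nonneg
    have hub : ∀ s : Set T, MeasurableSet s → ∫ t in s, Fd y t ∂ν ≤ 1 := fun s hs => by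
      rw [← hFd y s hs]
      simpa [pr] using ENNReal.toReal_mono ENNReal.one_ne_top prob_le_one
    have hInt : Integrable (Fd y) ν :=
      aux_integrable ν (Fd y) (hmFd y) (aux_ae_nonneg ν (Fd y) (hmFd y) hle) hub
    have hBeq : ∀ ℓ, μ ({ω | G ω ≤ y} ∩ {ω | D ω = 1 ∧ Z ω = ℓ})
        = μ {ω | Z ω = ℓ} * μ {ω | G ω ≤ y ∧ η ω ∈ h ℓ ⁻¹' {1}} := by
      intro ℓ
      have e1 : {ω | G ω ≤ y} ∩ {ω | D ω = 1 ∧ Z ω = ℓ}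
          = Z ⁻¹' {ℓ} ∩ (fun ω => (G ω, η ω)) ⁻¹' (Iic y ×ˢ (h ℓ ⁻¹' {1})) := by
        ext ω
        simp only [Set.mem_setOf_eq, Set.mem_inter_iff, Set.mem_preimage,
          Set.mem_singleton_iff, Set.mem_prod, Set.mem_Iic]
        rw [hD ω]
        constructor
        · rintro ⟨hg, h1, h2⟩; rw [h2] at h1; exact ⟨h2, hg, h1⟩
        · rintro ⟨h1, hg, h2⟩; rw [h1]; exact ⟨hg, h2, rfl⟩
      have e2 : Z ⁻¹' {ℓ} = {ω | Z ω = ℓ} := by ext ω; simp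
      have e3 : (fun ω => (G ω, η ω)) ⁻¹' (Iic y ×ˢ (h ℓ ⁻¹' {1}))
          = {ω | G ω ≤ y ∧ η ω ∈ h ℓ ⁻¹' {1}} := by
        ext ω; simp
      rw [e1, hind.measure_inter_preimage_eq_mul _ _ (measurableSet_singleton ℓ)
        (measurableSet_Iic.prod (hSmeas ℓ)), e2, e3]
    have hcpr : ∀ ℓ, cpr μ {ω | G ω ≤ y} {ω | D ω = 1 ∧ Z ω = ℓ}
        = (∫ t in h ℓ ⁻¹' {1}, Fd y t ∂ν) / (ν (h ℓ ⁻¹' {1})).toReal := by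
      intro ℓ
      have hFd' : (μ {ω | G ω ≤ y ∧ η ω ∈ h ℓ ⁻¹' {1}}).toReal
          = ∫ t in h ℓ ⁻¹' {1}, Fd y t ∂ν := hFd y _ (hSmeas ℓ)
      simp only [cpr, pr]
      rw [hBeq ℓ, hA ℓ, ENNReal.toReal_mul, ENNReal.toReal_mul, hFd']
      exact mul_div_mul_left _ _ (hZne ℓ)
    have hWint : ∀ ℓ, Integrable
        (fun t => (h ℓ ⁻¹' {1}).indicator (fun _ => v ℓ / (ν (h ℓ ⁻¹' {1})).toReal) t * Fd y t) ν := by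
      intro ℓ
      refine hInt.bdd_mul (c := |v ℓ / (ν (h ℓ ⁻¹' {1})).toReal|)
        ((measurable_const.indicator (hSmeas ℓ)).aestronglyMeasurable) (Eventually.of_forall fun t => ?_)
      by_cases ht : t ∈ h ℓ ⁻¹' {1}
      · simp only [Set.indicator_of_mem ht, Real.norm_eq_abs, le_refl]
      · simp only [Set.indicator_of_notMem ht, norm_zero, abs_nonneg]
    calc (∑ ℓ, v ℓ * cpr μ {ω | G ω ≤ y} {ω | D ω = 1 ∧ Z ω = ℓ})
        = ∑ ℓ, (v ℓ / (ν (h ℓ ⁻¹' {1})).toReal) * ∫ t in h ℓ ⁻¹' {1}, Fd y t ∂ν := by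
          refine Finset.sum_congr rfl fun ℓ _ => ?_
          rw [hcpr ℓ]; ring
      _ = ∑ ℓ, ∫ t, (h ℓ ⁻¹' {1}).indicator
            (fun _ => v ℓ / (ν (h ℓ ⁻¹' {1})).toReal) t * Fd y t ∂ν := by
          refine Finset.sum_congr rfl fun ℓ _ => ?_
          have : (fun t => (h ℓ ⁻¹' {1}).indicator
              (fun _ => v ℓ / (ν (h ℓ ⁻¹' {1})).toReal) t * Fd y t)
              = fun t => (h ℓ ⁻¹' {1}).indicator
                (fun t => (v ℓ / (ν (h ℓ ⁻¹' {1})).toReal) * Fd y t) t := by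
            funext t
            rw [Set.indicator_mul_left]
          rw [this, integral_indicator (hSmeas ℓ), integral_const_mul]
      _ = ∫ t, ∑ ℓ, (h ℓ ⁻¹' {1}).indicator
            (fun _ => v ℓ / (ν (h ℓ ⁻¹' {1})).toReal) t * Fd y t ∂ν := by
          rw [integral_finset_sum _ (fun ℓ _ => hWint ℓ)]
      _ = ∫ t, (∑ ℓ, (h ℓ ⁻¹' {1}).indicator
            (fun _ => v ℓ / (ν (h ℓ ⁻¹' {1})).toReal) t) * Fd y t ∂ν := by
          congr 1; funext t; rw [Finset.sum_mul]
  -- independence of Z from (Y1, η) and (Y0, η)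
  have hind1 : IndepFun Z (fun ω => (Y1 ω, η ω)) μ := by
    have hφ : Measurable (fun p : ℝ × ℝ × T => (p.2.1, p.2.2)) :=
      (measurable_snd.fst).prodMk (measurable_snd.snd)
    have := hindep.comp measurable_id hφ
    simpa [Function.comp_def] using this
  have hind0 : IndepFun Z (fun ω => (Y0 ω, η ω)) μ := by
    have hφ : Measurable (fun p : ℝ × ℝ × T => (p.1, p.2.2)) :=
      measurable_fst.prodMk (measurable_snd.snd)
    have := hindep.comp measurable_id hφ
    simpa [Function.comp_def] using this
  have hmain1 := main Y1 F1 hmY1 hF1meas hind1 hF1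
  have hmain0 := main Y0 F0 hmY0 hF0meas hind0 hF0
  -- properties of the weight functions
  have hWmeas : ∀ v : Fin L → ℝ, Measurable (fun t => ∑ ℓ, (h ℓ ⁻¹' {1}).indicator
      (fun _ => v ℓ / (ν (h ℓ ⁻¹' {1})).toReal) t) := fun v =>
    Finset.measurable_sum _ (fun ℓ _ => measurable_const.indicator (hSmeas ℓ))
  have hWnn : ∀ v : Fin L → ℝ, (∀ ℓ, 0 ≤ v ℓ) → ∀ t, 0 ≤ ∑ ℓ, (h ℓ ⁻¹' {1}).indicator
      (fun _ => v ℓ / (ν (h ℓ ⁻¹' {1})).toReal) t := fun v hv t =>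
    Finset.sum_nonneg fun ℓ _ => Set.indicator_nonneg
      (fun _ _ => div_nonneg (hv ℓ) (hapos ℓ).le) t
  have hWone : ∀ v : Fin L → ℝ, (∑ ℓ, v ℓ) = 1 →
      (∫ t, (∑ ℓ, (h ℓ ⁻¹' {1}).indicator
        (fun _ => v ℓ / (ν (h ℓ ⁻¹' {1})).toReal) t) ∂ν) = 1 := by
    intro v hv
    rw [integral_finset_sum _ (fun ℓ _ => (integrable_const _).indicator (hSmeas ℓ))]
    have heach : ∀ ℓ, ∫ t, (h ℓ ⁻¹' {1}).indicator
        (fun _ => v ℓ / (ν (h ℓ ⁻¹' {1})).toReal) t ∂ν = v ℓ := by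
      intro ℓ
      rw [integral_indicator_const _ (hSmeas ℓ), smul_eq_mul, mul_comm, measureReal_def,
        div_mul_cancel₀ _ (hapos ℓ).ne']
    rw [Finset.sum_congr rfl fun ℓ _ => heach ℓ]
    exact hv
  intro w wt hw hwt hsw hswt hS1 y
  rw [hmain0 w y, hmain0 wt y]
  exact condS1star _ _ (hWmeas w) (hWmeas wt) (hWnn w hw) (hWnn wt hwt)
    (hWone w hsw) (hWone wt hswt)
    (fun y' => by rw [← hmain1 w y', ← hmain1 wt y']; exact hS1 y') y
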